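/- Let G be a finite simple graph containing an induced sun S_ℓ (ℓ ≥ 3) as an induced subgraph, with vertices v_1,...,v_{2ℓ} where {v_1,...,v_{2ℓ-1} odd-indexed} = {v_1, v_3, ..., v_{2ℓ−1}} is an independent set of G, and edges {v_1,v_2},{v_2,v_3},...,{v_{2ℓ−1},v_{2ℓ}},{v_{2ℓ},v_1} are present. Then Σ_{k=1}^{ℓ}(e_{2k−1} + e_{2k}) = (e_1 + e_{2ℓ}) + Σ_{k=1}^{ℓ−1}(e_{2k} + e_{2k+1}), the summands on the two sides are disjoint as edges, and whenever a + a' = b + b' with a, a' summands from the left side and b, b' vectors of the form e_u + e_v ({u,v} ∈ E(G)) or 2e_w (w a vertex), one has {a, a'} = {b, b'}. -/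

import Mathlib

/-- The standard basis vector `e_a` of `ℤ^V`. -/
def ev {V : Type*} [DecidableEq V] (a : V) : V → ℤ := Pi.single a 1

lemma count_ev {V : Type*} [DecidableEq V] (M : Multiset V) (t : V) :
    (M.map ev).sum t = (M.count t : ℤ) := by
  induction M using Multiset.induction_on with
  | empty => simp
  | cons a M ih =>
    simp only [Multiset.map_cons, Multiset.sum_cons, Multiset.count_cons, Pi.add_apply, ih]
    by_cases h : t = a <;> simp [ev, h, Pi.single_apply] <;> ring

lemma evsum_inj {V : Type*} [DecidableEq V] {M N : Multiset V}
    (h : (M.map ev).sum = (N.map ev).sum) : M = N := by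
  ext t
  have := congrFun h t
  rw [count_ev, count_ev] at this
  exact_mod_cast this

lemma pair_eq {V : Type*} [DecidableEq V] {a b c d : V}
    (h : ({a, b} : Multiset V) = {c, d}) : (a = c ∧ b = d) ∨ (a = d ∧ b = c) := by
  have ha : a ∈ ({c, d} : Multiset V) := h ▸ (by simp)
  simp only [Multiset.insert_eq_cons, Multiset.mem_cons, Multiset.mem_singleton] at ha
  rcases ha with ha | ha
  · subst ha
    exact Or.inl ⟨rfl, by simpa using (Multiset.cons_inj_right a).mp h⟩
  · subst ha
    rw [show ({c, a} : Multiset V) = {a, c} from Multiset.cons_swap c a {}] at h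
    exact Or.inr ⟨rfl, by simpa using (Multiset.cons_inj_right a).mp h⟩

lemma ev_pair_eq {V : Type*} [DecidableEq V] {a b c d : V}
    (h : ev a + ev b = ev c + ev d) : (a = c ∧ b = d) ∨ (a = d ∧ b = c) := by
  apply pair_eq
  apply evsum_inj
  simpa using h

lemma mod_prev (ℓ k : ℕ) (hl : 3 ≤ ℓ) (hk : k < ℓ) :
    (2 * k + (2 * ℓ - 1)) % (2 * ℓ) = if k = 0 then 2 * ℓ - 1 else 2 * k - 1 := by
  split
  · next h => subst h; simp only [Nat.mul_zero, Nat.zero_add]; exact Nat.mod_eq_of_lt (by omega)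
  · next h =>
    have : 2 * k + (2 * ℓ - 1) = (2 * k - 1) + 1 * (2 * ℓ) := by omega
    rw [this, Nat.add_mul_mod_self_right, Nat.mod_eq_of_lt (by omega)]

lemma nbr {V : Type*} (G : SimpleGraph V) (ℓ : ℕ) (v : ℕ → V)
    (hl : 3 ≤ ℓ) (hinj : Set.InjOn v (Set.Iio (2 * ℓ)))
    (hodd : ∀ k < ℓ, ∀ x : V, G.Adj (v (2 * k)) x →
      (x = v ((2 * k + 1) % (2 * ℓ)) ∨ x = v ((2 * k + (2 * ℓ - 1)) % (2 * ℓ))))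
    {i m : ℕ} (hi : i < ℓ) (hm : m < 2 * ℓ) (h : G.Adj (v (2 * i)) (v m)) :
    m = 2 * i + 1 ∨ (i = 0 ∧ m = 2 * ℓ - 1) ∨ (1 ≤ i ∧ m = 2 * i - 1) := by
  rcases hodd i hi (v m) h with h1 | h1
  · left
    rw [Nat.mod_eq_of_lt (by omega)] at h1
    exact hinj (by simp; omega) (by simp; omega) h1
  · right
    rw [mod_prev ℓ i hl hi] at h1
    by_cases h0 : i = 0
    · rw [if_pos h0] at h1
      exact Or.inl ⟨h0, hinj (by simp; omega) (by simp; omega) h1⟩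
    · rw [if_neg h0] at h1
      exact Or.inr ⟨by omega, hinj (by simp; omega) (by simp; omega) h1⟩


lemma triple_rot {α : Type*} (a b c : α) : ({a, b, c} : Multiset α) = {c, a, b} := by
  simp only [Multiset.insert_eq_cons, ← Multiset.cons_zero]
  rw [Multiset.cons_swap b c, Multiset.cons_swap a c]

lemma quad_rot {α : Type*} (a b c d : α) : ({a, b, c, d} : Multiset α) = {c, d, a, b} := by
  simp only [Multiset.insert_eq_cons, ← Multiset.cons_zero]
  rw [Multiset.cons_swap b c, Multiset.cons_swap a c, Multiset.cons_swap b d,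
    Multiset.cons_swap a d]

lemma swap12 {α : Type*} (a b c d : α) : ({a, b, c, d} : Multiset α) = {b, a, c, d} := by
  simp only [Multiset.insert_eq_cons]
  rw [Multiset.cons_swap a b]

lemma quad_ev {V : Type*} [DecidableEq V] (a b c d : V) :
    ev a + ev b + (ev c + ev d) = (({a, b, c, d} : Multiset V).map ev).sum := by
  simp only [Multiset.insert_eq_cons, Multiset.map_cons, Multiset.sum_cons,
    Multiset.map_singleton, Multiset.sum_singleton]
  abel

lemma quad {V : Type*} [DecidableEq V] (G : SimpleGraph V) (ℓ : ℕ) (v : ℕ → V)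
    (hl : 3 ≤ ℓ) (hinj : Set.InjOn v (Set.Iio (2 * ℓ)))
    (hodd : ∀ k < ℓ, ∀ x : V, G.Adj (v (2 * k)) x →
      (x = v ((2 * k + 1) % (2 * ℓ)) ∨ x = v ((2 * k + (2 * ℓ - 1)) % (2 * ℓ))))
    {i j : ℕ} (hi : i < ℓ) (hj : j < ℓ) (hij : i ≠ j) {y z w : V}
    (hxy : G.Adj (v (2 * i)) y) (hzw : G.Adj z w)
    (heq : ({v (2 * i), v (2 * i + 1), v (2 * j), v (2 * j + 1)} : Multiset V)
      = {v (2 * i), y, z, w}) :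
    ({ev (v (2 * i)) + ev y, ev z + ev w} : Multiset (V → ℤ))
      = {ev (v (2 * i)) + ev (v (2 * i + 1)), ev (v (2 * j)) + ev (v (2 * j + 1))} := by
  have h3 : ({v (2 * i + 1), v (2 * j), v (2 * j + 1)} : Multiset V) = {y, z, w} := by
    simpa using (Multiset.cons_inj_right (v (2 * i))).mp heq
  have hy : y ∈ ({v (2 * i + 1), v (2 * j), v (2 * j + 1)} : Multiset V) := h3 ▸ (by simp)
  simp only [Multiset.insert_eq_cons, Multiset.mem_cons, Multiset.mem_singleton] at hy
  rcases hy with hy | hy | hy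
  · -- y = v (2i+1)
    subst hy
    have h2 : ({v (2 * j), v (2 * j + 1)} : Multiset V) = {z, w} := by
      simpa using (Multiset.cons_inj_right (v (2 * i + 1))).mp h3
    rcases pair_eq h2 with ⟨rfl, rfl⟩ | ⟨hz, hw⟩
    · rfl
    · rw [← hz, ← hw, show ev (v (2 * j + 1)) + ev (v (2 * j))
        = ev (v (2 * j)) + ev (v (2 * j + 1)) from add_comm _ _]
  · -- y = v (2j) : impossible (two even-indexed vertices adjacent)
    exfalso
    rw [hy] at hxy
    rcases nbr G ℓ v hl hinj hodd hi (by omega) hxy with h | ⟨h1, h2⟩ | ⟨h1, h2⟩ <;> omega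
  · -- y = v (2j+1) : leads to contradiction via the two adjacency constraints
    exfalso
    rw [hy] at hxy
    have hA := nbr G ℓ v hl hinj hodd hi (by omega) hxy
    -- now {z,w} = {v(2i+1), v(2j)}
    rw [hy] at h3
    rw [triple_rot (v (2 * i + 1)) (v (2 * j)) (v (2 * j + 1))] at h3
    have h2 : ({v (2 * i + 1), v (2 * j)} : Multiset V) = {z, w} := by
      simpa using (Multiset.cons_inj_right (v (2 * j + 1))).mp h3
    have hadj : G.Adj (v (2 * j)) (v (2 * i + 1)) := by
      rcases pair_eq h2 with ⟨hz, hw⟩ | ⟨hz, hw⟩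
      · rw [← hz, ← hw] at hzw; exact hzw.symm
      · rw [← hz, ← hw] at hzw; exact hzw
    have hB := nbr G ℓ v hl hinj hodd hj (by omega) hadj
    rcases hA with h | ⟨h1, h2'⟩ | ⟨h1, h2'⟩ <;>
      rcases hB with h' | ⟨h1', h2''⟩ | ⟨h1', h2''⟩ <;> omega

theorem stmt10 (V : Type*) [Fintype V] [DecidableEq V] (G : SimpleGraph V)
    (ℓ : ℕ) (hl : 3 ≤ ℓ) (v : ℕ → V)
    (hinj : Set.InjOn v (Set.Iio (2 * ℓ)))
    (hcyc : ∀ k < 2 * ℓ, G.Adj (v k) (v ((k + 1) % (2 * ℓ))))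
    (hodd : ∀ k < ℓ, ∀ x : V, G.Adj (v (2 * k)) x →
      (x = v ((2 * k + 1) % (2 * ℓ)) ∨ x = v ((2 * k + (2 * ℓ - 1)) % (2 * ℓ)))) :
    let L : Multiset (V → ℤ) :=
      (Multiset.range ℓ).map (fun k => ev (v (2 * k)) + ev (v (2 * k + 1)))
    let R : Multiset (V → ℤ) :=
      (ev (v 0) + ev (v (2 * ℓ - 1))) ::ₘ
        (Multiset.range (ℓ - 1)).map (fun k => ev (v (2 * k + 1)) + ev (v (2 * k + 2)))
    let Conf : Set (V → ℤ) :=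
      { w | (∃ x y, G.Adj x y ∧ w = ev x + ev y) ∨ (∃ x, w = (2 : ℤ) • ev x) }
    L.sum = R.sum ∧ Disjoint L R ∧
      ∀ a a' : V → ℤ, ({a, a'} : Multiset (V → ℤ)) ≤ L →
        ∀ b b' : V → ℤ, b ∈ Conf → b' ∈ Conf → a + a' = b + b' →
          ({a, a'} : Multiset (V → ℤ)) = {b, b'} := by
  intro L R Conf
  have vinj : ∀ {s t : ℕ}, s < 2 * ℓ → t < 2 * ℓ → v s = v t → s = t :=
    fun hs ht h => hinj (Set.mem_Iio.mpr hs) (Set.mem_Iio.mpr ht) h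
  refine ⟨?_, ?_, ?_⟩
  · -- sum equality
    obtain ⟨n, rfl⟩ : ∃ n, ℓ = n + 1 := ⟨ℓ - 1, by omega⟩
    have hL : L.sum = ∑ k ∈ Finset.range (n + 1), (ev (v (2 * k)) + ev (v (2 * k + 1))) := rfl
    have hR : R.sum = (ev (v 0) + ev (v (2 * n + 1))) +
        ∑ k ∈ Finset.range n, (ev (v (2 * k + 1)) + ev (v (2 * k + 2))) := by
      show Multiset.sum (_ ::ₘ _) = _
      rw [Multiset.sum_cons]
      have e1 : 2 * (n + 1) - 1 = 2 * n + 1 := by omega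
      rw [e1]
      rfl
    rw [hL, hR, Finset.sum_add_distrib, Finset.sum_add_distrib,
      Finset.sum_range_succ' (fun k => ev (v (2 * k))) n,
      Finset.sum_range_succ (fun k => ev (v (2 * k + 1))) n]
    have hc : ∑ k ∈ Finset.range n, ev (v (2 * (k + 1))) =
        ∑ k ∈ Finset.range n, ev (v (2 * k + 2)) :=
      Finset.sum_congr rfl fun k _ => by rw [show 2 * (k + 1) = 2 * k + 2 by ring]
    rw [hc, show 2 * 0 = 0 by ring]
    abel
  · -- disjointness
    rw [Multiset.disjoint_left]
    intro x hxL hxR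
    rcases Multiset.mem_map.mp hxL with ⟨k, hk, rfl⟩
    rw [Multiset.mem_range] at hk
    rcases Multiset.mem_cons.mp hxR with h | h
    · rcases ev_pair_eq (a := v (2 * k)) (b := v (2 * k + 1)) (c := v 0)
        (d := v (2 * ℓ - 1)) h with ⟨h1, h2⟩ | ⟨h1, h2⟩
      · have := vinj (by omega) (by omega) h1
        have := vinj (by omega) (by omega) h2
        omega
      · have := vinj (by omega) (by omega) h1
        omega
    · rcases Multiset.mem_map.mp h with ⟨m, hm, hEq⟩
      rw [Multiset.mem_range] at hm
      rcases ev_pair_eq (a := v (2 * k)) (b := v (2 * k + 1)) (c := v (2 * m + 1))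
        (d := v (2 * m + 2)) hEq.symm with ⟨h1, h2⟩ | ⟨h1, h2⟩
      · have := vinj (by omega) (by omega) h1
        omega
      · have := vinj (by omega) (by omega) h1
        have := vinj (by omega) (by omega) h2
        omega
  · -- uniqueness
    intro a a' hle b b' hb hb' hsum
    have haL : a ∈ L := Multiset.mem_of_le hle (by simp)
    have ha'L : a' ∈ L := Multiset.mem_of_le hle (by simp)
    have hLnd : L.Nodup := by
      refine Multiset.Nodup.map_on ?_ (Multiset.nodup_range ℓ)
      intro i hi j hj h
      rw [Multiset.mem_range] at hi hj
      rcases ev_pair_eq (a := v (2 * i)) (b := v (2 * i + 1)) (c := v (2 * j))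
        (d := v (2 * j + 1)) h with ⟨h1, h2⟩ | ⟨h1, h2⟩
      · have := vinj (by omega) (by omega) h1
        omega
      · have := vinj (by omega) (by omega) h1
        omega
    have hne : a ≠ a' := by
      intro h
      subst h
      have h1 := Multiset.le_iff_count.mp hle a
      have h2 := Multiset.nodup_iff_count_le_one.mp hLnd a
      simp [Multiset.count_cons] at h1
      omega
    rcases Multiset.mem_map.mp haL with ⟨i, hi, rfl⟩
    rcases Multiset.mem_map.mp ha'L with ⟨j, hj, rfl⟩
    rw [Multiset.mem_range] at hi hj
    beta_reduce at hsum hne ⊢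
    have hij : i ≠ j := fun h => hne (by rw [h])
    have hnn : ∀ c, c ∈ Conf → ∀ t, (0 : ℤ) ≤ c t := by
      rintro c (⟨x, y, hxy, rfl⟩ | ⟨x, rfl⟩) t
      · simp only [Pi.add_apply, ev, Pi.single_apply]
        split_ifs <;> norm_num
      · simp only [Pi.smul_apply, ev, Pi.single_apply, smul_eq_mul]
        split_ifs <;> norm_num
    have hQ : ev (v (2 * i)) + ev (v (2 * i + 1)) + (ev (v (2 * j)) + ev (v (2 * j + 1)))
        = (({v (2 * i), v (2 * i + 1), v (2 * j), v (2 * j + 1)} : Multiset V).map ev).sum :=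
      quad_ev _ _ _ _
    have hQnd : ({v (2 * i), v (2 * i + 1), v (2 * j), v (2 * j + 1)} : Multiset V).Nodup := by
      simp only [Multiset.insert_eq_cons, Multiset.nodup_cons, Multiset.mem_cons,
        Multiset.mem_singleton, Multiset.nodup_singleton, and_true]
      push_neg
      refine ⟨⟨?_, ?_, ?_⟩, ⟨?_, ?_⟩, ?_⟩ <;>
        exact fun h => absurd (vinj (by omega) (by omega) h) (by omega)
    have hle1 : ∀ t, (ev (v (2 * i)) + ev (v (2 * i + 1))
        + (ev (v (2 * j)) + ev (v (2 * j + 1)))) t ≤ 1 := by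
      intro t
      rw [hQ, count_ev]
      exact_mod_cast Multiset.nodup_iff_count_le_one.mp hQnd t
    have hedge : ∀ c c' : V → ℤ, c ∈ Conf → c' ∈ Conf →
        c + c' = ev (v (2 * i)) + ev (v (2 * i + 1)) + (ev (v (2 * j)) + ev (v (2 * j + 1))) →
        ∃ x y, G.Adj x y ∧ c = ev x + ev y := by
      rintro c c' (h | ⟨x, rfl⟩) hc' hcc
      · exact h
      · exfalso
        have h1 := hle1 x
        have h2 := hnn c' hc' x
        have h3 := congrFun hcc x
        simp only [Pi.add_apply, Pi.smul_apply, smul_eq_mul] at h1 h2 h3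
        have h4 : ev x x = 1 := by simp [ev]
        rw [h4] at h3
        omega
    obtain ⟨x, y, hxy, rfl⟩ := hedge b b' hb hb' hsum.symm
    obtain ⟨z, w, hzw, rfl⟩ := hedge b' _ hb' hb (by rw [add_comm]; exact hsum.symm)
    have hms : ({v (2 * i), v (2 * i + 1), v (2 * j), v (2 * j + 1)} : Multiset V)
        = {x, y, z, w} := by
      apply evsum_inj
      rw [← quad_ev, ← quad_ev]
      exact hsum
    have hp : v (2 * i) ∈ ({x, y, z, w} : Multiset V) := hms ▸ (by simp)
    simp only [Multiset.insert_eq_cons, Multiset.mem_cons, Multiset.mem_singleton] at hp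
    rcases hp with hp | hp | hp | hp
    · subst hp
      exact (quad G ℓ v hl hinj hodd hi hj hij hxy hzw hms).symm
    · subst hp
      have hms2 := hms.trans (swap12 x (v (2 * i)) z w)
      rw [show ev x + ev (v (2 * i)) = ev (v (2 * i)) + ev x from add_comm _ _]
      exact (quad G ℓ v hl hinj hodd hi hj hij hxy.symm hzw hms2).symm
    · subst hp
      have hms2 := hms.trans (quad_rot x y (v (2 * i)) w)
      rw [show ({ev x + ev y, ev (v (2 * i)) + ev w} : Multiset (V → ℤ))
        = {ev (v (2 * i)) + ev w, ev x + ev y} from Multiset.cons_swap _ _ _]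
      exact (quad G ℓ v hl hinj hodd hi hj hij hzw hxy hms2).symm
    · subst hp
      have hms2 := hms.trans ((quad_rot x y z (v (2 * i))).trans (swap12 z (v (2 * i)) x y))
      rw [show ev z + ev (v (2 * i)) = ev (v (2 * i)) + ev z from add_comm _ _,
        show ({ev x + ev y, ev (v (2 * i)) + ev z} : Multiset (V → ℤ))
          = {ev (v (2 * i)) + ev z, ev x + ev y} from Multiset.cons_swap _ _ _]
      exact (quad G ℓ v hl hinj hodd hi hj hij hzw.symm hxy hms2).symm
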